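/- arXiv:1012.4795 — 6 statements merged into one kernel-verified Lean document; each statement's English description precedes it below -/
import Mathlib

section
/- Let A and B be symmetric positive definite n×n matrices and X any real n×n matrix such that the block matrix [[A, X],[Xᵀ, B]] is positive semidefinite. Then for every ω with 0 < ω < 1, the block matrix [[(1/ω)A, 0],[0, (1/(1−ω))B]] − [[A, X],[Xᵀ, B]] is positive semidefinite. -/
open Matrix

theorem stmt2 {n : ℕ} (A B X : Matrix (Fin n) (Fin n) ℝ)
    (hA : A.PosDef) (hB : B.PosDef)
    (hJ : (Matrix.fromBlocks A X Xᵀ B).PosSemidef)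
    (ω : ℝ) (h0 : 0 < ω) (h1 : ω < 1) :
    (Matrix.fromBlocks ((1 / ω) • A) 0 0 ((1 / (1 - ω)) • B)
      - Matrix.fromBlocks A X Xᵀ B).PosSemidef := by
  have hω1 : 0 < 1 - ω := by linarith
  have hpos : 0 < (1 - ω) / ω := div_pos hω1 h0
  set c : ℝ := Real.sqrt ((1 - ω) / ω) with hc
  have hcpos : 0 < c := Real.sqrt_pos.mpr hpos
  have hc2 : c * c = (1 - ω) / ω := Real.mul_self_sqrt hpos.le
  have hcne : c ≠ 0 := ne_of_gt hcpos
  set P : Matrix (Fin n ⊕ Fin n) (Fin n ⊕ Fin n) ℝ :=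
    Matrix.fromBlocks (c • (1 : Matrix (Fin n) (Fin n) ℝ)) 0 0
      ((-(1/c)) • (1 : Matrix (Fin n) (Fin n) ℝ)) with hP
  have key : Matrix.fromBlocks ((1 / ω) • A) 0 0 ((1 / (1 - ω)) • B)
      - Matrix.fromBlocks A X Xᵀ B = P * (Matrix.fromBlocks A X Xᵀ B) * Pᴴ := by
    have hPH : Pᴴ = P := by
      rw [hP, Matrix.fromBlocks_conjTranspose]
      simp
    rw [hPH, hP, Matrix.fromBlocks_multiply, Matrix.fromBlocks_multiply]
    have hcc : (1 - ω) / ω = 1 / ω - 1 := by field_simp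
    have hωc : ω * c ^ 2 = 1 - ω := by
      rw [sq, hc2]; field_simp
    have hdd : ω / (1 - ω) = 1 / (1 - ω) - 1 := by field_simp; ring
    ext (i | i) (j | j) <;>
      simp [Matrix.fromBlocks, Matrix.smul_mul, Matrix.mul_smul, smul_smul, hc2,
        mul_comm, hcne, Matrix.sub_apply, Matrix.smul_apply] <;> ring_nf <;>
      field_simp
    linear_combination (B i j) * hωc
  rw [key]
  exact hJ.mul_mul_conjTranspose_same P
end

section
/- Let A₁,…,A_m be symmetric positive definite n×n matrices, and let M be a symmetric mn×mn PSD matrix whose i-th diagonal n×n block equals A_i. If ω₁,…,ω_m are positive reals with ∑ᵢ ωᵢ = 1, then the block diagonal matrix with blocks (1/ωᵢ)Aᵢ satisfies diag((1/ω₁)A₁, …, (1/ω_m)A_m) ⪰ M. -/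
open Matrix

theorem stmt3 {n m : ℕ} (A : Fin m → Matrix (Fin n) (Fin n) ℝ)
    (hA : ∀ i, (A i).PosDef)
    (M : Matrix (Fin n × Fin m) (Fin n × Fin m) ℝ)
    (hM : M.PosSemidef)
    (hdiag : ∀ i k l, M (k, i) (l, i) = A i k l)
    (ω : Fin m → ℝ) (hω : ∀ i, 0 < ω i) (hsum : ∑ i, ω i = 1) :
    (Matrix.blockDiagonal (fun i => (1 / ω i) • A i) - M).PosSemidef := by
  have hMt : Mᵀ = M := by
    rw [← Matrix.conjTranspose_eq_transpose_of_trivial]; exact hM.1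
  rw [Matrix.posSemidef_iff_dotProduct_mulVec]
  constructor
  · apply Matrix.IsHermitian.sub _ hM.1
    show _ᴴ = _
    rw [Matrix.blockDiagonal_conjTranspose]
    refine congrArg Matrix.blockDiagonal ?_
    funext k
    rw [Matrix.conjTranspose_smul, star_trivial, (hA k).1.eq]
  · intro x
    simp only [star_trivial, Matrix.sub_mulVec, dotProduct_sub, sub_nonneg]
    set e : Fin m → (Fin n × Fin m → ℝ) := fun i p => if p.2 = i then x p else 0 with he
    have hx : x = ∑ i, e i := by
      funext p
      simp [he, Finset.sum_apply, Finset.sum_ite_eq]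
    set q : Fin m → Fin m → ℝ := fun i j => e i ⬝ᵥ M *ᵥ e j with hq
    have hsd : ∀ (v : Fin m → Fin n × Fin m → ℝ) (w : Fin n × Fin m → ℝ),
        (∑ i, v i) ⬝ᵥ w = ∑ i, v i ⬝ᵥ w := by
      intro v w
      simp only [dotProduct, Finset.sum_apply, Finset.sum_mul]
      rw [Finset.sum_comm]
    have hds : ∀ (w : Fin n × Fin m → ℝ) (v : Fin m → Fin n × Fin m → ℝ),
        w ⬝ᵥ (∑ i, v i) = ∑ i, w ⬝ᵥ v i := by
      intro w v
      simp only [dotProduct, Finset.sum_apply, Finset.mul_sum]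
      rw [Finset.sum_comm]
    have hbil : x ⬝ᵥ M *ᵥ x = ∑ i, ∑ j, q i j := by
      conv_lhs => rw [hx]
      rw [hsd]
      refine Finset.sum_congr rfl fun i _ => ?_
      have hmv : M *ᵥ (∑ j, e j) = ∑ j, M *ᵥ e j := by
        simp only [← Matrix.mulVecLin_apply, map_sum]
      rw [hmv, hds]
    have hsymm : ∀ i j, q j i = q i j := by
      intro i j
      rw [hq]
      simp only
      rw [Matrix.dotProduct_mulVec, ← Matrix.mulVec_transpose, hMt,
        dotProduct_comm]
    have key : ∀ i j, q i j ≤ (ω j / ω i) * q i i / 2 + (ω i / ω j) * q j j / 2 := by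
      intro i j
      set c : ℝ := Real.sqrt (ω j / ω i) with hc
      have hcpos : 0 < c := Real.sqrt_pos.2 (div_pos (hω j) (hω i))
      have h0 := hM.dotProduct_mulVec_nonneg (c • e i - c⁻¹ • e j)
      simp only [star_trivial, Matrix.mulVec_sub, Matrix.mulVec_smul,
        sub_dotProduct, dotProduct_sub, smul_dotProduct,
        dotProduct_smul, smul_eq_mul] at h0
      have h0' : 0 ≤ c * (c * q i i - c⁻¹ * q j i) - c⁻¹ * (c * q i j - c⁻¹ * q j j) := h0
      have hc2 : c * c = ω j / ω i := Real.mul_self_sqrt (le_of_lt (div_pos (hω j) (hω i)))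
      have hcinv2 : c⁻¹ * c⁻¹ = ω i / ω j := by
        rw [← mul_inv, hc2, inv_div]
      have hcc : c * c⁻¹ = 1 := mul_inv_cancel₀ (ne_of_gt hcpos)
      have expand : c * (c * q i i - c⁻¹ * q j i) - c⁻¹ * (c * q i j - c⁻¹ * q j j)
          = (c * c) * q i i - (c * c⁻¹) * q j i - (c * c⁻¹) * q i j
            + (c⁻¹ * c⁻¹) * q j j := by ring
      rw [expand, hc2, hcc, hcinv2, hsymm i j] at h0'
      linarith
    have hqdiag : ∀ i, q i i = ∑ k, x (k, i) * ∑ l, A i k l * x (l, i) := by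
      intro i
      have inner : M *ᵥ e i = fun p => ∑ l, M p (l, i) * x (l, i) := by
        funext p
        show (∑ r, M p r * e i r) = _
        rw [Fintype.sum_prod_type_right, Finset.sum_comm]
        simp [he, mul_ite, mul_zero, Finset.sum_ite_eq']
      rw [hq]
      simp only
      rw [inner]
      show (∑ p, e i p * ∑ l, M p (l, i) * x (l, i)) = _
      rw [Fintype.sum_prod_type_right]
      simp only [he, ite_mul, zero_mul]
      rw [Finset.sum_comm]
      simp [Finset.sum_ite_eq', hdiag]
    have hD : x ⬝ᵥ (Matrix.blockDiagonal (fun i => (1 / ω i) • A i)) *ᵥ x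
        = ∑ i, (1 / ω i) * q i i := by
      have inner : (Matrix.blockDiagonal (fun i => (1 / ω i) • A i)) *ᵥ x
          = fun p => ∑ l, (1 / ω p.2) * A p.2 p.1 l * x (l, p.2) := by
        funext p
        show (∑ r, Matrix.blockDiagonal (fun i => (1 / ω i) • A i) p r * x r) = _
        rw [Fintype.sum_prod_type_right, Finset.sum_comm]
        simp only [Matrix.blockDiagonal_apply, Matrix.smul_apply, smul_eq_mul,
          ite_mul, zero_mul]
        simp [Finset.sum_ite_eq]
      rw [inner]
      show (∑ p, x p * ∑ l, (1 / ω p.2) * A p.2 p.1 l * x (l, p.2)) = _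
      rw [Fintype.sum_prod_type_right]
      refine Finset.sum_congr rfl fun i _ => ?_
      rw [hqdiag i]
      simp only [Finset.mul_sum]
      exact Finset.sum_congr rfl fun k _ => Finset.sum_congr rfl fun l _ => by ring
    rw [hbil, hD]
    have hrow : ∀ i, ∑ j, (ω j / ω i) * q i i / 2 = (1 / ω i) * q i i / 2 := by
      intro i
      rw [← Finset.sum_div, ← Finset.sum_mul, ← Finset.sum_div, hsum]
    calc ∑ i, ∑ j, q i j
        ≤ ∑ i, ∑ j, ((ω j / ω i) * q i i / 2 + (ω i / ω j) * q j j / 2) :=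
          Finset.sum_le_sum fun i _ => Finset.sum_le_sum fun j _ => key i j
      _ = ∑ i, ∑ j, (ω j / ω i) * q i i / 2 + ∑ i, ∑ j, (ω i / ω j) * q j j / 2 := by
          simp [Finset.sum_add_distrib]
      _ = ∑ i, ∑ j, (ω j / ω i) * q i i / 2 + ∑ i, ∑ j, (ω j / ω i) * q i i / 2 := by
          rw [Finset.sum_comm (f := fun i j => (ω i / ω j) * q j j / 2)]
      _ = ∑ i, (1 / ω i) * q i i := by
          simp only [hrow]
          rw [← Finset.sum_add_distrib]
          exact Finset.sum_congr rfl fun i _ => by ring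
end

section
/- Let A and U be symmetric positive definite n×n matrices and u ∈ ℝⁿ. If there exists ω ∈ (0,1) such that U ⪰ (1/ω)A + (1/(1−ω))uuᵀ, then the ellipsoid {x : xᵀU⁻¹x − 2xᵀU⁻¹u + uᵀU⁻¹u ≤ 1} contains the ellipsoid {x : xᵀA⁻¹x ≤ 1}. -/
open Matrix

private lemma dot_symm {n : ℕ} {S : Matrix (Fin n) (Fin n) ℝ} (hS : Sᵀ = S)
    (a b : Fin n → ℝ) : a ⬝ᵥ (S *ᵥ b) = b ⬝ᵥ (S *ᵥ a) := by
  rw [dotProduct_mulVec, ← mulVec_transpose, hS, dotProduct_comm]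

theorem stmt8 {n : ℕ} (A U : Matrix (Fin n) (Fin n) ℝ)
    (hA : A.PosDef) (hU : U.PosDef) (u : Fin n → ℝ)
    (h : ∃ ω : ℝ, 0 < ω ∧ ω < 1 ∧
      (U - ((1 / ω) • A + (1 / (1 - ω)) • Matrix.vecMulVec u u)).PosSemidef) :
    {x : Fin n → ℝ | x ⬝ᵥ (A⁻¹ *ᵥ x) ≤ 1} ⊆
      {x : Fin n → ℝ |
        x ⬝ᵥ (U⁻¹ *ᵥ x) - 2 * (x ⬝ᵥ (U⁻¹ *ᵥ u)) + u ⬝ᵥ (U⁻¹ *ᵥ u) ≤ 1} := by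
  obtain ⟨ω, hω0, hω1, hPSD⟩ := h
  intro x hx
  simp only [Set.mem_setOf_eq] at hx ⊢
  have hω1' : 0 < 1 - ω := by linarith
  have hAsymm : Aᵀ = A := hA.isHermitian.eq
  have hUinv : (U⁻¹).PosDef := hU.inv
  have hUisymm : (U⁻¹)ᵀ = U⁻¹ := hUinv.isHermitian.eq
  have hUunit : IsUnit U.det := isUnit_iff_ne_zero.2 hU.det_pos.ne'
  have hAunit : IsUnit A.det := isUnit_iff_ne_zero.2 hA.det_pos.ne'
  set z : Fin n → ℝ := x - u with hz
  set y : Fin n → ℝ := U⁻¹ *ᵥ z with hy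
  have hUy : U *ᵥ y = z := by
    rw [hy, mulVec_mulVec, mul_nonsing_inv U hUunit, one_mulVec]
  have key0 : x ⬝ᵥ (U⁻¹ *ᵥ x) - 2 * (x ⬝ᵥ (U⁻¹ *ᵥ u)) + u ⬝ᵥ (U⁻¹ *ᵥ u)
      = z ⬝ᵥ (U⁻¹ *ᵥ z) := by
    have h1 : u ⬝ᵥ (U⁻¹ *ᵥ x) = x ⬝ᵥ (U⁻¹ *ᵥ u) := dot_symm hUisymm u x
    simp only [hz, mulVec_sub, dotProduct_sub, sub_dotProduct]
    rw [h1]; ring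
  rw [key0]
  have key1 : z ⬝ᵥ (U⁻¹ *ᵥ z) = 2 * (y ⬝ᵥ z) - y ⬝ᵥ (U *ᵥ y) := by
    rw [hUy]
    have hyz : y ⬝ᵥ z = z ⬝ᵥ (U⁻¹ *ᵥ z) := by rw [hy, dotProduct_comm]
    rw [hyz]; ring
  rw [key1]
  -- yᵀ M y ≤ yᵀ U y
  have hMy : ω⁻¹ * (y ⬝ᵥ (A *ᵥ y)) + (1 - ω)⁻¹ * (u ⬝ᵥ y) ^ 2 ≤ y ⬝ᵥ (U *ᵥ y) := by
    have h0 := hPSD.dotProduct_mulVec_nonneg y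
    simp only [RCLike.star_def, star_trivial] at h0
    have hvv : y ⬝ᵥ ((Matrix.vecMulVec u u) *ᵥ y) = (u ⬝ᵥ y) ^ 2 := by
      have hmv : (Matrix.vecMulVec u u) *ᵥ y = (u ⬝ᵥ y) • u := by
        ext i
        simp [Matrix.mulVec, Matrix.vecMulVec_apply, dotProduct, Finset.mul_sum,
          mul_comm, mul_left_comm, mul_assoc]
      rw [hmv, dotProduct_smul]
      have : y ⬝ᵥ u = u ⬝ᵥ y := dotProduct_comm _ _
      rw [smul_eq_mul, this, sq]
    have hexp : y ⬝ᵥ ((U - ((1 / ω) • A + (1 / (1 - ω)) • Matrix.vecMulVec u u)) *ᵥ y)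
        = y ⬝ᵥ (U *ᵥ y) - (ω⁻¹ * (y ⬝ᵥ (A *ᵥ y)) + (1 - ω)⁻¹ * (u ⬝ᵥ y) ^ 2) := by
      rw [sub_mulVec, add_mulVec, smul_mulVec, smul_mulVec,
        dotProduct_sub, dotProduct_add, dotProduct_smul, dotProduct_smul, hvv]
      simp only [smul_eq_mul, one_div]
    rw [hexp] at h0
    linarith
  -- 2 yᵀx ≤ ω + ω⁻¹ yᵀ A y
  have hCS : 2 * (y ⬝ᵥ x) ≤ ω + ω⁻¹ * (y ⬝ᵥ (A *ᵥ y)) := by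
    set w : Fin n → ℝ := ω⁻¹ • y - A⁻¹ *ᵥ x with hw
    have h0 := hA.posSemidef.dotProduct_mulVec_nonneg w
    simp only [RCLike.star_def, star_trivial] at h0
    have hAAx : A *ᵥ (A⁻¹ *ᵥ x) = x := by
      rw [mulVec_mulVec, mul_nonsing_inv A hAunit, one_mulVec]
    have hexp : w ⬝ᵥ (A *ᵥ w)
        = ω⁻¹ ^ 2 * (y ⬝ᵥ (A *ᵥ y)) - 2 * ω⁻¹ * (y ⬝ᵥ x) + x ⬝ᵥ (A⁻¹ *ᵥ x) := by
      have h1 : (A⁻¹ *ᵥ x) ⬝ᵥ x = x ⬝ᵥ (A⁻¹ *ᵥ x) := dotProduct_comm _ _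
      have h2 : (A⁻¹ *ᵥ x) ⬝ᵥ (A *ᵥ y) = y ⬝ᵥ x := by
        rw [dot_symm hAsymm _ y, mulVec_mulVec, mul_nonsing_inv A hAunit, one_mulVec]
      have h3 : y ⬝ᵥ x = x ⬝ᵥ y := dotProduct_comm _ _
      rw [hw, mulVec_sub, mulVec_smul, hAAx, sub_dotProduct, dotProduct_sub,
        dotProduct_sub, smul_dotProduct, smul_dotProduct, dotProduct_smul,
        dotProduct_smul, h1, h2]
      simp only [smul_eq_mul, h3]
      ring
    rw [hexp] at h0
    have h5 : ω⁻¹ * (y ⬝ᵥ (A *ᵥ y)) - 2 * (y ⬝ᵥ x) + ω * (x ⬝ᵥ (A⁻¹ *ᵥ x))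
        = ω * (ω⁻¹ ^ 2 * (y ⬝ᵥ (A *ᵥ y)) - 2 * ω⁻¹ * (y ⬝ᵥ x) + x ⬝ᵥ (A⁻¹ *ᵥ x)) := by
      field_simp
    have h6 : 0 ≤ ω⁻¹ * (y ⬝ᵥ (A *ᵥ y)) - 2 * (y ⬝ᵥ x) + ω * (x ⬝ᵥ (A⁻¹ *ᵥ x)) := by
      rw [h5]; exact mul_nonneg hω0.le h0
    nlinarith [mul_le_mul_of_nonneg_left hx hω0.le]
  -- scalar inequality
  set s : ℝ := u ⬝ᵥ y with hs
  have hsc : -2 * s - (1 - ω)⁻¹ * s ^ 2 ≤ 1 - ω := by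
    have h1 : (1 - ω)⁻¹ * (s + (1 - ω)) ^ 2 ≥ 0 :=
      mul_nonneg (inv_pos.2 hω1').le (sq_nonneg _)
    have h2 : (1 - ω)⁻¹ * (1 - ω) = 1 := inv_mul_cancel₀ hω1'.ne'
    nlinarith
  have hyu : y ⬝ᵥ u = s := by rw [hs, dotProduct_comm]
  have hyz : y ⬝ᵥ z = y ⬝ᵥ x - s := by
    rw [hz, dotProduct_sub, hyu]
  rw [hyz]
  nlinarith [hMy, hCS, hsc]
end

section
/- Let A, U be symmetric positive definite n×n matrices, u ∈ ℝⁿ, and ω ∈ (0,1) with 1 − ω − uᵀU⁻¹u > 0. Then U ⪰ (1/ω)A + (1/(1−ω))uuᵀ if and only if ωA⁻¹ ⪰ U⁻¹ + (U⁻¹u)(U⁻¹u)ᵀ/(1 − ω − uᵀU⁻¹u). -/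
open Matrix

-- helper lemmas, test compile
lemma my_mul_vecMulVec {n : ℕ} (M : Matrix (Fin n) (Fin n) ℝ) (a b : Fin n → ℝ) :
    M * vecMulVec a b = vecMulVec (M *ᵥ a) b := by
  ext i j
  simp [Matrix.mul_apply, vecMulVec_apply, mulVec, dotProduct, Finset.sum_mul, mul_assoc]

lemma my_vecMulVec_mul {n : ℕ} (a b : Fin n → ℝ) (M : Matrix (Fin n) (Fin n) ℝ) :
    vecMulVec a b * M = vecMulVec a (Mᵀ *ᵥ b) := by
  ext i j
  simp [Matrix.mul_apply, vecMulVec_apply, mulVec, dotProduct, Finset.mul_sum, mul_assoc,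
    mul_comm, mul_left_comm]

lemma my_psd_smul {n : ℕ} {c : ℝ} (hc : 0 ≤ c) {M : Matrix (Fin n) (Fin n) ℝ}
    (hM : M.PosSemidef) : (c • M).PosSemidef := by
  rw [posSemidef_iff_dotProduct_mulVec]
  constructor
  · show _ = _
    rw [conjTranspose_smul, star_trivial, hM.1.eq]
  · intro x
    have := (posSemidef_iff_dotProduct_mulVec.mp hM).2 x
    simp only [smul_mulVec, dotProduct_smul, smul_eq_mul]
    positivity

lemma my_pd_smul {n : ℕ} {c : ℝ} (hc : 0 < c) {M : Matrix (Fin n) (Fin n) ℝ}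
    (hM : M.PosDef) : (c • M).PosDef := by
  rw [posDef_iff_dotProduct_mulVec]
  constructor
  · show _ = _
    rw [conjTranspose_smul, star_trivial, hM.1.eq]
  · intro x hx
    have := (posDef_iff_dotProduct_mulVec.mp hM).2 hx
    simp only [smul_mulVec, dotProduct_smul, smul_eq_mul]
    positivity

lemma my_psd_vecMulVec {n : ℕ} (v : Fin n → ℝ) : (vecMulVec v v).PosSemidef := by
  rw [posSemidef_iff_dotProduct_mulVec]
  constructor
  · ext i j; simp [vecMulVec_apply, conjTranspose_apply, mul_comm]
  · intro x
    have : (star x) ⬝ᵥ (vecMulVec v v *ᵥ x) = (v ⬝ᵥ x) * (v ⬝ᵥ x) := by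
      simp [mulVec, vecMulVec_apply, dotProduct, Finset.mul_sum, Finset.sum_mul, mul_assoc,
        mul_comm, mul_left_comm]
    rw [this]
    exact mul_self_nonneg _

lemma my_inv_anti {n : ℕ} {A B : Matrix (Fin n) (Fin n) ℝ} (hA : A.PosDef) (hB : B.PosDef)
    (h : (B - A).PosSemidef) : (A⁻¹ - B⁻¹).PosSemidef := by
  have hdA : IsUnit A.det := isUnit_iff_ne_zero.2 hA.det_pos.ne'
  have hdB : IsUnit B.det := isUnit_iff_ne_zero.2 hB.det_pos.ne'
  have hA1 : A * A⁻¹ = 1 := mul_nonsing_inv _ hdA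
  have hA2 : A⁻¹ * A = 1 := nonsing_inv_mul _ hdA
  have hB1 : B * B⁻¹ = 1 := mul_nonsing_inv _ hdB
  have hB2 : B⁻¹ * B = 1 := nonsing_inv_mul _ hdB
  have key : A⁻¹ - B⁻¹ =
      (((B - A) * B⁻¹)ᴴ * A⁻¹ * ((B - A) * B⁻¹)) + ((B⁻¹)ᴴ * (B - A) * B⁻¹) := by
    have hsymm : ((B - A) * B⁻¹)ᴴ = B⁻¹ * (B - A) := by
      rw [conjTranspose_mul, conjTranspose_sub, hB.isHermitian.inv.eq, hB.isHermitian.eq,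
        hA.isHermitian.eq]
    rw [hsymm, hB.isHermitian.inv.eq]
    simp only [Matrix.sub_mul, Matrix.mul_sub, Matrix.mul_assoc, hA1, hA2, hB1, hB2,
      Matrix.mul_one, Matrix.one_mul]
    simp only [← Matrix.mul_assoc, hA1, hA2, hB1, hB2, Matrix.mul_one, Matrix.one_mul]
    abel
  rw [key]
  exact ((hA.inv.posSemidef.conjTranspose_mul_mul_same _).add
    (h.conjTranspose_mul_mul_same _))

lemma my_vecMulVec_mul_vecMulVec {n : ℕ} (u v : Fin n → ℝ) :
    vecMulVec u u * vecMulVec v v = (u ⬝ᵥ v) • vecMulVec u v := by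
  ext i j
  simp only [Matrix.mul_apply, vecMulVec_apply, Matrix.smul_apply, smul_eq_mul, dotProduct]
  rw [Finset.sum_mul]
  exact Finset.sum_congr rfl fun k _ => by ring

theorem stmt11 {n : ℕ} (A U : Matrix (Fin n) (Fin n) ℝ)
    (hA : A.PosDef) (hU : U.PosDef) (u : Fin n → ℝ)
    (ω : ℝ) (h0 : 0 < ω) (h1 : ω < 1)
    (hnd : 0 < 1 - ω - u ⬝ᵥ (U⁻¹ *ᵥ u)) :
    (U - ((1 / ω) • A + (1 / (1 - ω)) • Matrix.vecMulVec u u)).PosSemidef ↔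
      (ω • A⁻¹ - (U⁻¹ + (1 / (1 - ω - u ⬝ᵥ (U⁻¹ *ᵥ u))) •
        Matrix.vecMulVec (U⁻¹ *ᵥ u) (U⁻¹ *ᵥ u))).PosSemidef := by
  set v : Fin n → ℝ := U⁻¹ *ᵥ u with hv
  set s : ℝ := u ⬝ᵥ v with hs
  set c : ℝ := 1 / (1 - ω) with hc
  set d : ℝ := 1 / (1 - ω - s) with hd
  have hω1 : (0:ℝ) < 1 - ω := by linarith
  have hωne : (1:ℝ) - ω ≠ 0 := hω1.ne'
  have hsne : (1:ℝ) - ω - s ≠ 0 := hnd.ne'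
  have hdU : IsUnit U.det := isUnit_iff_ne_zero.2 hU.det_pos.ne'
  have hdA : IsUnit A.det := isUnit_iff_ne_zero.2 hA.det_pos.ne'
  have hU1 : U * U⁻¹ = 1 := mul_nonsing_inv _ hdU
  have hA1 : A * A⁻¹ = 1 := mul_nonsing_inv _ hdA
  have hUT : Uᵀ = U := by
    rw [← conjTranspose_eq_transpose_of_trivial, hU.isHermitian.eq]
  have hUinvT : (U⁻¹)ᵀ = U⁻¹ := by rw [transpose_nonsing_inv, hUT]
  set M : Matrix (Fin n) (Fin n) ℝ := U - c • vecMulVec u u with hM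
  set N : Matrix (Fin n) (Fin n) ℝ := U⁻¹ + d • vecMulVec v v with hN
  set P : Matrix (Fin n) (Fin n) ℝ := (1 / ω) • A with hP
  have hNpd : N.PosDef := by
    refine hU.inv.add_posSemidef (my_psd_smul ?_ (my_psd_vecMulVec v))
    rw [hd]; positivity
  have hu : U *ᵥ v = u := by rw [hv, mulVec_mulVec, hU1, one_mulVec]
  have e2 : U * vecMulVec v v = vecMulVec u v := by rw [my_mul_vecMulVec, hu]
  have e3 : vecMulVec u u * U⁻¹ = vecMulVec u v := by rw [my_vecMulVec_mul, hUinvT, hv]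
  have e4 : vecMulVec u u * vecMulVec v v = s • vecMulVec u v :=
    my_vecMulVec_mul_vecMulVec u v
  have hMN : M * N = 1 := by
    have expand : M * N = U * U⁻¹ + d • (U * vecMulVec v v) -
        (c • (vecMulVec u u * U⁻¹) + (c * d) • (vecMulVec u u * vecMulVec v v)) := by
      rw [hM, hN]
      simp only [Matrix.sub_mul, Matrix.mul_add, Matrix.smul_mul, Matrix.mul_smul, smul_smul]
      module
    rw [expand, hU1, e2, e3, e4, smul_smul]
    have hco : d - (c + c * d * s) = 0 := by
      rw [hc, hd]; field_simp; ring
    have hz : d • vecMulVec u v - (c • vecMulVec u v + (c * d * s) • vecMulVec u v) = 0 := by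
      rw [← add_smul, ← sub_smul, hco, zero_smul]
    rw [add_sub_assoc, hz, add_zero]
  have hMinv : M⁻¹ = N := inv_eq_right_inv hMN
  have hNinv : N⁻¹ = M := inv_eq_left_inv hMN
  have hMpd : M.PosDef := hNinv ▸ hNpd.inv
  have hPpd : P.PosDef := my_pd_smul (by positivity) hA
  have hPinv : P⁻¹ = ω • A⁻¹ := by
    refine inv_eq_right_inv ?_
    rw [hP, Matrix.smul_mul, Matrix.mul_smul, smul_smul, hA1, one_div,
      inv_mul_cancel₀ h0.ne', one_smul]
  have hL : U - ((1 / ω) • A + c • vecMulVec u u) = M - P := by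
    rw [hM, hP]; abel
  constructor
  · intro h
    rw [hL] at h
    have := my_inv_anti hPpd hMpd h
    rwa [hPinv, hMinv] at this
  · intro h
    have h' : (P⁻¹ - M⁻¹).PosSemidef := by rwa [hPinv, hMinv]
    have := my_inv_anti hMpd.inv hPpd.inv h'
    rwa [nonsing_inv_nonsing_inv _ (isUnit_iff_ne_zero.2 hMpd.det_pos.ne'),
      nonsing_inv_nonsing_inv _ (isUnit_iff_ne_zero.2 hPpd.det_pos.ne'), ← hL] at this
end

section
/- Let A, U be symmetric positive definite n×n matrices and u ∈ ℝⁿ such that U ⪰ (1/ω)A + (1/(1−ω))uuᵀ for some ω ∈ (0,1). Then uᵀU⁻¹u < 1 − ω; in particular the center 0 of the enclosed ellipsoid lies strictly inside E(u,U). -/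
open Matrix

theorem stmt16 {n : ℕ} (A U : Matrix (Fin n) (Fin n) ℝ)
    (hA : A.PosDef) (hU : U.PosDef) (u : Fin n → ℝ)
    (ω : ℝ) (h0 : 0 < ω) (h1 : ω < 1)
    (h : (U - ((1 / ω) • A + (1 / (1 - ω)) • Matrix.vecMulVec u u)).PosSemidef) :
    u ⬝ᵥ (U⁻¹ *ᵥ u) < 1 - ω := by
  have hc : 0 < 1 - ω := by linarith
  by_cases hu : u = 0
  · simpa [hu] using hc
  set x := U⁻¹ *ᵥ u with hxdef
  have hUx : U *ᵥ x = u := by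
    rw [hxdef, mulVec_mulVec, mul_nonsing_inv _ hU.det_pos.ne'.isUnit, one_mulVec]
  have hx0 : x ≠ 0 := by
    intro hx
    apply hu; rw [← hUx, hx, mulVec_zero]
  set t := u ⬝ᵥ x with ht
  have hxu : x ⬝ᵥ u = t := dotProduct_comm x u
  have hq : x ⬝ᵥ (vecMulVec u u *ᵥ x) = t ^ 2 := by
    simp only [vecMulVec, mulVec, dotProduct, ht, of_apply, Finset.mul_sum, Finset.sum_mul, sq]
    rw [Finset.sum_comm]
    apply Finset.sum_congr rfl; intro i _
    apply Finset.sum_congr rfl; intro j _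
    ring
  have htpos : 0 < t := by
    have := hU.dotProduct_mulVec_pos hx0
    simpa [hUx, hxu] using this
  have hApos : 0 < x ⬝ᵥ (A *ᵥ x) := by simpa using hA.dotProduct_mulVec_pos hx0
  have hs := h.dotProduct_mulVec_nonneg x
  simp only [sub_mulVec, add_mulVec, smul_mulVec, dotProduct_sub, dotProduct_add,
    dotProduct_smul, star_trivial, hUx, hxu, hq, smul_eq_mul] at hs
  have hω : 0 < 1 / ω := by positivity
  have h2 : t ^ 2 / (1 - ω) < t := by
    have := mul_pos hω hApos
    rw [div_eq_inv_mul, ← one_div]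
    linarith
  have h3 : t ^ 2 < t * (1 - ω) := (div_lt_iff₀ hc).mp h2
  nlinarith [htpos]
end

section
/- Let A₁,…,A_m be symmetric positive definite n×n matrices and a₁,…,a_m ∈ ℝⁿ. Suppose (u,U) with U symmetric positive definite satisfies, for each i, U ⪰ (1/ωᵢ)Aᵢ + (1/(1−ωᵢ))(u−aᵢ)(u−aᵢ)ᵀ for some ωᵢ ∈ (0,1). Then the ellipsoid E(u,U) = {x : (x−u)ᵀU⁻¹(x−u) ≤ 1} contains every ellipsoid E(aᵢ,Aᵢ) = {x : (x−aᵢ)ᵀAᵢ⁻¹(x−aᵢ) ≤ 1}, i = 1,…,m. -/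
open Matrix

private lemma symmdot18 {n : ℕ} {M : Matrix (Fin n) (Fin n) ℝ} (hM : M.IsHermitian)
    (v w : Fin n → ℝ) : (M *ᵥ v) ⬝ᵥ w = v ⬝ᵥ (M *ᵥ w) := by
  have h2 : Mᵀ = M := by simpa using hM.eq
  rw [Matrix.dotProduct_mulVec, ← Matrix.mulVec_transpose, h2]

private lemma vmv18 {n : ℕ} (d w : Fin n → ℝ) :
    (vecMulVec d d) *ᵥ w = (d ⬝ᵥ w) • d := by
  ext i; simp [vecMulVec, mulVec, dotProduct, Finset.mul_sum, mul_comm, mul_assoc, mul_left_comm]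

theorem stmt18 {n m : ℕ} (A : Fin m → Matrix (Fin n) (Fin n) ℝ)
    (a : Fin m → Fin n → ℝ) (hA : ∀ i, (A i).PosDef)
    (U : Matrix (Fin n) (Fin n) ℝ) (hU : U.PosDef) (u : Fin n → ℝ)
    (ω : Fin m → ℝ) (hω0 : ∀ i, 0 < ω i) (hω1 : ∀ i, ω i < 1)
    (h : ∀ i, (U - ((1 / ω i) • A i +
      (1 / (1 - ω i)) • Matrix.vecMulVec (u - a i) (u - a i))).PosSemidef) :
    ∀ i, {x : Fin n → ℝ | (x - a i) ⬝ᵥ ((A i)⁻¹ *ᵥ (x - a i)) ≤ 1} ⊆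
      {x : Fin n → ℝ | (x - u) ⬝ᵥ (U⁻¹ *ᵥ (x - u)) ≤ 1} := by
  intro i x hx
  simp only [Set.mem_setOf_eq] at hx ⊢
  have hωp := hω0 i
  have hs : (0:ℝ) < 1 - ω i := by linarith [hω1 i]
  have hdetU : IsUnit U.det := isUnit_iff_ne_zero.mpr hU.det_pos.ne'
  have hdetA : IsUnit (A i).det := isUnit_iff_ne_zero.mpr (hA i).det_pos.ne'
  set d : Fin n → ℝ := u - a i with hd
  set y : Fin n → ℝ := x - a i with hy
  set z : Fin n → ℝ := x - u with hz
  have hzyd : z = y - d := by rw [hz, hy, hd]; abel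
  set w : Fin n → ℝ := U⁻¹ *ᵥ z with hw
  -- U *ᵥ w = z
  have hUw : U *ᵥ w = z := by
    rw [hw, Matrix.mulVec_mulVec, Matrix.mul_nonsing_inv U hdetU, Matrix.one_mulVec]
  -- names for scalars
  set q : ℝ := z ⬝ᵥ (U⁻¹ *ᵥ z) with hq
  set t : ℝ := w ⬝ᵥ d with ht
  set P : ℝ := w ⬝ᵥ (A i *ᵥ w) with hP
  set r : ℝ := y ⬝ᵥ ((A i)⁻¹ *ᵥ y) with hr
  -- q = w ⬝ᵥ z
  have hq1 : q = w ⬝ᵥ y - t := by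
    rw [hq, ← hw, dotProduct_comm, hzyd, dotProduct_sub, ht]
  have hQ : w ⬝ᵥ (U *ᵥ w) = q := by
    rw [hUw, hq, ← hw, dotProduct_comm]
  -- expand PSD hypothesis
  have hpsd : 0 ≤ q - (1/ω i)*P - (1/(1-ω i))*t^2 := by
    have h1 := (h i).dotProduct_mulVec_nonneg w
    rw [Matrix.sub_mulVec, Matrix.add_mulVec, Matrix.smul_mulVec,
      Matrix.smul_mulVec, vmv18, ← hd] at h1
    simp only [star_trivial, dotProduct_sub, dotProduct_add, dotProduct_smul,
      smul_eq_mul, smul_dotProduct] at h1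
    rw [hQ, ← hP, dotProduct_comm d w, ← ht] at h1
    nlinarith [h1]
  -- Cauchy-Schwarz-like bound via PSD of A
  have hAherm := (hA i).1
  have hAinv : (A i)⁻¹.IsHermitian := ((hA i).inv).1
  have hcs : 0 ≤ P - 2*(ω i)*(w ⬝ᵥ y) + (ω i)^2 * r := by
    set v : Fin n → ℝ := w - ω i • ((A i)⁻¹ *ᵥ y) with hv
    have hAA : A i *ᵥ ((A i)⁻¹ *ᵥ y) = y := by
      rw [Matrix.mulVec_mulVec, Matrix.mul_nonsing_inv _ hdetA, Matrix.one_mulVec]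
    have hAv : A i *ᵥ v = A i *ᵥ w - ω i • y := by
      rw [hv, Matrix.mulVec_sub, Matrix.mulVec_smul, hAA]
    have h0 := (hA i).posSemidef.dotProduct_mulVec_nonneg v
    rw [star_trivial, hAv] at h0
    rw [hv] at h0
    simp only [sub_dotProduct, dotProduct_sub, smul_dotProduct, dotProduct_smul,
      smul_eq_mul] at h0
    have e1 : ((A i)⁻¹ *ᵥ y) ⬝ᵥ (A i *ᵥ w) = y ⬝ᵥ w := by
      rw [← symmdot18 hAherm ((A i)⁻¹ *ᵥ y) w, Matrix.mulVec_mulVec,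
        Matrix.mul_nonsing_inv _ hdetA, Matrix.one_mulVec]
    have e2 : ((A i)⁻¹ *ᵥ y) ⬝ᵥ y = r := by rw [hr, dotProduct_comm]
    have e3 : y ⬝ᵥ w = w ⬝ᵥ y := dotProduct_comm y w
    rw [e1, e2, e3, ← hP] at h0
    nlinarith [h0]
  -- divided forms
  have hA2 : 2*(w ⬝ᵥ y) ≤ (1/ω i)*P + ω i * r := by
    have e : (1/ω i)*P + ω i * r - 2*(w ⬝ᵥ y)
        = (P - 2*(ω i)*(w ⬝ᵥ y) + (ω i)^2 * r)/(ω i) := by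
      field_simp; ring
    have := div_nonneg hcs hωp.le
    linarith [e ▸ this]
  have hB : -2*t - (1/(1-ω i))*t^2 ≤ 1 - ω i := by
    have e : (1 - ω i) + 2*t + (1/(1-ω i))*t^2 = (t + (1-ω i))^2/(1-ω i) := by
      field_simp; ring
    have := div_nonneg (sq_nonneg (t + (1-ω i))) hs.le
    linarith [e ▸ this]
  have hωr : ω i * r ≤ ω i * 1 := mul_le_mul_of_nonneg_left hx hωp.le
  -- combine
  linarith [hq1, hpsd, hA2, hB, hωr]
end
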